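/- If Φ admits a Kraus decomposition in which all Kraus operators have rank one, then for every state ρ on ℂ^d ⊗ ℂ^d, the output (id ⊗ Φ)(ρ) is separable (a convex combination of product states); i.e., Φ is entanglement breaking. -/

import Mathlib

open Matrix Kronecker BigOperators
open scoped ComplexOrder

/-- σ on ℂ^d ⊗ ℂ^d is separable: a nonnegative combination of tensor products
of rank-one projectors |u⟩⟨u| ⊗ |v⟩⟨v|. -/
def SeparableMat (d : ℕ) (σ : Matrix (Fin d × Fin d) (Fin d × Fin d) ℂ) : Prop :=
  ∃ (n : ℕ) (c : Fin n → ℝ) (u v : Fin n → Fin d → ℂ),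
    (∀ m, 0 ≤ c m) ∧
    σ = ∑ m, (c m : ℂ) •
      (Matrix.vecMulVec (u m) (star (u m)) ⊗ₖ Matrix.vecMulVec (v m) (star (v m)))

lemma rank_one_vecMulVec {d : ℕ} {A : Matrix (Fin d) (Fin d) ℂ} (h : A.rank = 1) :
    ∃ x y : Fin d → ℂ, A = Matrix.vecMulVec x y := by
  rw [Matrix.rank_eq_finrank_span_cols] at h
  obtain ⟨v, -, hv⟩ := finrank_eq_one_iff'.mp h
  choose c hc using fun j => hv ⟨Aᵀ j, Submodule.subset_span ⟨j, rfl⟩⟩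
  refine ⟨v.1, c, ?_⟩
  ext i j
  have := congrArg (fun w : Submodule.span ℂ (Set.range Aᵀ) => (w : Fin d → ℂ) i) (hc j)
  simpa [Matrix.vecMulVec_apply, mul_comm] using this.symm

lemma key {d : ℕ} (x y : Fin d → ℂ) (ρ : Matrix (Fin d × Fin d) (Fin d × Fin d) ℂ) :
    ((1 : Matrix (Fin d) (Fin d) ℂ) ⊗ₖ Matrix.vecMulVec x y) * ρ *
      ((1 : Matrix (Fin d) (Fin d) ℂ) ⊗ₖ Matrix.vecMulVec x y)ᴴ
    = ((Matrix.of fun i (p : Fin d × Fin d) => if i = p.1 then y p.2 else 0) * ρ *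
        (Matrix.of fun i (p : Fin d × Fin d) => if i = p.1 then y p.2 else 0)ᴴ)
      ⊗ₖ Matrix.vecMulVec x (star x) := by
  ext ⟨i, j⟩ ⟨i', j'⟩
  simp only [Matrix.mul_apply, Matrix.kroneckerMap_apply, Matrix.vecMulVec_apply,
    Matrix.one_apply, Matrix.conjTranspose_apply, Matrix.of_apply, Fintype.sum_prod_type,
    ite_mul, mul_ite, zero_mul, mul_zero, Finset.sum_ite_eq, Finset.mem_univ, if_true,
    Finset.sum_mul, Finset.mul_sum, star_mul', apply_ite star, star_zero, Pi.star_apply]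
  refine Finset.sum_congr rfl fun a _ => Finset.sum_congr rfl fun b _ => ?_
  split_ifs
  · refine Finset.sum_congr rfl fun p _ => Finset.sum_congr rfl fun q _ => ?_
    split_ifs
    · rw [star_one]; ring
    · rfl
  · rfl

lemma conjTranspose_mul_self_eq_sum {d : ℕ} (B : Matrix (Fin d) (Fin d) ℂ) :
    Bᴴ * B = ∑ k, Matrix.vecMulVec (star (B k)) (star (star (B k))) := by
  ext i i'
  simp [Matrix.mul_apply, Matrix.vecMulVec_apply, Matrix.conjTranspose_apply, Matrix.sum_apply]

/-- if Φ(ρ) = ∑_α K_α ρ K_α* with every K_α of rank one, then for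
every state ρ on ℂ^d ⊗ ℂ^d the output (id ⊗ Φ)(ρ) = ∑_α (1 ⊗ K_α) ρ (1 ⊗ K_α)*
is separable: Φ is entanglement breaking. -/
theorem entanglement_breaking_of_rank_one_kraus (d : ℕ) {ι : Type} [Fintype ι]
    (K : ι → Matrix (Fin d) (Fin d) ℂ) (hK : ∀ α, (K α).rank = 1)
    (ρ : Matrix (Fin d × Fin d) (Fin d × Fin d) ℂ)
    (hρ : ρ.PosSemidef) (hρ1 : ρ.trace = 1) :
    SeparableMat d
      (∑ α, ((1 : Matrix (Fin d) (Fin d) ℂ) ⊗ₖ K α) * ρ *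
        (((1 : Matrix (Fin d) (Fin d) ℂ) ⊗ₖ K α))ᴴ) := by
  classical
  choose x y hxy using fun α => rank_one_vecMulVec (hK α)
  have hM : ∀ α, ((Matrix.of fun i (p : Fin d × Fin d) => if i = p.1 then y α p.2 else 0) * ρ *
      (Matrix.of fun i (p : Fin d × Fin d) => if i = p.1 then y α p.2 else 0)ᴴ).PosSemidef :=
    fun α => hρ.mul_mul_conjTranspose_same _
  choose B hB using fun α => (by
    open scoped MatrixOrder Matrix.Norms.L2Operator in
    obtain ⟨B, hB⟩ := CStarAlgebra.nonneg_iff_eq_star_mul_self.mp (hM α).nonneg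
    exact ⟨B, by rw [hB, star_eq_conjTranspose]⟩ :
      ∃ B : Matrix (Fin d) (Fin d) ℂ,
        (Matrix.of fun i (p : Fin d × Fin d) => if i = p.1 then y α p.2 else 0) * ρ *
        (Matrix.of fun i (p : Fin d × Fin d) => if i = p.1 then y α p.2 else 0)ᴴ = Bᴴ * B)
  have hσ : (∑ α, ((1 : Matrix (Fin d) (Fin d) ℂ) ⊗ₖ K α) * ρ *
        (((1 : Matrix (Fin d) (Fin d) ℂ) ⊗ₖ K α))ᴴ)
      = ∑ p : ι × Fin d, Matrix.vecMulVec (star (B p.1 p.2)) (star (star (B p.1 p.2))) ⊗ₖ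
          Matrix.vecMulVec (x p.1) (star (x p.1)) := by
    rw [Fintype.sum_prod_type]
    refine Finset.sum_congr rfl fun α _ => ?_
    rw [hxy α, key, hB α, conjTranspose_mul_self_eq_sum]
    ext pq rs
    simp [Matrix.kroneckerMap_apply, Matrix.sum_apply, Finset.sum_mul]
  let e := (Fintype.equivFin (ι × Fin d)).symm
  refine ⟨Fintype.card (ι × Fin d), fun _ => 1, fun m => star (B (e m).1 (e m).2),
    fun m => x (e m).1, fun _ => zero_le_one, ?_⟩
  rw [hσ, ← Equiv.sum_comp e]
  simp
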